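/- Let $P \subset \mathbb{R}^d$ be a lattice polytope with $\dim P \le 2$, and let $(P, Q)$ be a quantum jump, i.e., $Q = \operatorname{conv}(P, z)$ is normal with exactly one more lattice point $z$ than $P$. Then $\operatorname{ht}_P(z) = 1$: the point $z$ has lattice height $1$ over every facet of $P$ visible from it. -/

import Mathlib

open Set Pointwise

/-- A point of `ℝ^ι` is a lattice point if all its coordinates are integers. -/
def IsLatticePt {ι : Type} (x : ι → ℝ) : Prop := ∀ i, ∃ n : ℤ, x i = n

/-- A lattice polytope: the convex hull of a nonempty finite set of lattice points. -/
def IsLatticePolytope {ι : Type} (P : Set (ι → ℝ)) : Prop :=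
  ∃ V : Set (ι → ℝ), V.Finite ∧ V.Nonempty ∧ (∀ x ∈ V, IsLatticePt x) ∧ P = convexHull ℝ V

/-- A polytope is normal if for every `c ≥ 1` each lattice point of the dilation `c • P`
is a sum of `c` lattice points of `P`. -/
def IsNormal {ι : Type} (P : Set (ι → ℝ)) : Prop :=
  ∀ c : ℕ, 0 < c → ∀ x : ι → ℝ, x ∈ (c : ℝ) • P → IsLatticePt x →
    ∃ f : Fin c → (ι → ℝ), (∀ i, f i ∈ P ∧ IsLatticePt (f i)) ∧ x = ∑ i, f i

namespace QJ

lemma fin2cases (j : Fin 2) : j = 0 ∨ j = 1 := by omega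

lemma aff_add {ι : Type} (f : (ι → ℝ) →ᵃ[ℝ] ℝ) (c x : ι → ℝ) :
    f (c + x) = f.linear c + f x := by
  simpa using f.map_vadd x c

lemma aff_sum {ι κ : Type} (f : (ι → ℝ) →ᵃ[ℝ] ℝ) (t : Finset κ) (w : κ → ℝ)
    (p : κ → ι → ℝ) (hw : ∑ i ∈ t, w i = 1) :
    f (∑ i ∈ t, w i • p i) = ∑ i ∈ t, w i * f (p i) := by
  have h0 : ∀ y : ι → ℝ, f y = f.linear y + f 0 := by
    intro y; have := aff_add f y 0; simpa using this
  rw [h0, map_sum]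
  simp only [map_smul, smul_eq_mul]
  calc (∑ i ∈ t, w i * f.linear (p i)) + f 0
      = ∑ i ∈ t, (w i * f.linear (p i) + w i * f 0) := by
        rw [Finset.sum_add_distrib, ← Finset.sum_mul, hw, one_mul]
    _ = ∑ i ∈ t, w i * f (p i) := by
        refine Finset.sum_congr rfl fun i _ => ?_
        rw [h0 (p i)]; ring

lemma latt_comb {ι : Type} {v e g : ι → ℝ} (hv : IsLatticePt v) (he : IsLatticePt e)
    (hg : IsLatticePt g) (k t : ℤ) : IsLatticePt (v + (k : ℝ) • e - (t : ℝ) • g) := by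
  intro j
  obtain ⟨a, ha⟩ := hv j; obtain ⟨b, hb⟩ := he j; obtain ⟨c, hc⟩ := hg j
  exact ⟨a + k * b - t * c, by
    simp only [Pi.sub_apply, Pi.add_apply, Pi.smul_apply, ha, hb, hc, smul_eq_mul]
    push_cast; ring⟩

lemma latt_sub {ι : Type} {x y : ι → ℝ} (hx : IsLatticePt x) (hy : IsLatticePt y) :
    IsLatticePt (x - y) := by
  intro j
  obtain ⟨a, ha⟩ := hx j; obtain ⟨b, hb⟩ := hy j
  exact ⟨a - b, by simp [ha, hb]⟩

lemma latt_add {ι : Type} {x y : ι → ℝ} (hx : IsLatticePt x) (hy : IsLatticePt y) :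
    IsLatticePt (x + y) := by
  intro j
  obtain ⟨a, ha⟩ := hx j; obtain ⟨b, hb⟩ := hy j
  exact ⟨a + b, by simp [ha, hb]⟩

lemma latt_exists {ι : Type} {x : ι → ℝ} (hx : IsLatticePt x) :
    ∃ X : ι → ℤ, ∀ j, x j = X j :=
  ⟨fun j => (hx j).choose, fun j => (hx j).choose_spec⟩

lemma numth (m A : ℤ) (hm : 2 ≤ m) :
    ∃ t k : ℤ, 1 ≤ t ∧ t ≤ m - 1 ∧ 0 ≤ k * m - t * A ∧ k * m - t * A ≤ m - t := by
  rcases eq_or_ne (Int.gcd A m) 1 with hg | hg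
  · have hb : (1 : ℤ) = A * Int.gcdA A m + m * Int.gcdB A m := by
      have := Int.gcd_eq_gcd_ab A m
      rw [hg] at this; exact_mod_cast this
    set α := Int.gcdA A m with hα
    set β := Int.gcdB A m with hβ
    set t := (-α) % m with ht
    have hm0 : (0:ℤ) < m := by omega
    have ht0 : 0 ≤ t := Int.emod_nonneg _ (by omega)
    have htm : t < m := Int.emod_lt_of_pos _ hm0
    have hdecomp : t = -α - m * ((-α) / m) := by
      rw [ht, Int.emod_def]
    refine ⟨t, β - A * ((-α) / m), ?_, by omega, ?_, ?_⟩
    · rcases eq_or_lt_of_le ht0 with h0 | h1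
      · exfalso
        have heq : A * t + 1 = m * (β - A * ((-α)/m)) := by rw [hdecomp]; ring_nf; linarith [hb]
        rw [← h0] at heq
        simp at heq
        have hdvd : m ∣ 1 := ⟨β - A * ((-α)/m), heq⟩
        have := Int.le_of_dvd one_pos hdvd
        omega
      · omega
    · have key : (β - A * ((-α)/m)) * m - t * A = 1 := by
        rw [hdecomp]; ring_nf; linarith [hb]
      omega
    · have key : (β - A * ((-α)/m)) * m - t * A = 1 := by
        rw [hdecomp]; ring_nf; linarith [hb]
      omega
  · set g : ℤ := (Int.gcd A m : ℤ) with hgdef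
    have hgm : g ∣ m := Int.gcd_dvd_right A m
    have hgA : g ∣ A := Int.gcd_dvd_left A m
    have hgpos : 0 < g := by
      have : Int.gcd A m ≠ 0 := by
        intro h0
        have := Int.gcd_eq_zero_iff.mp h0
        omega
      positivity
    have hg2 : 2 ≤ g := by
      have : Int.gcd A m ≠ 1 := hg
      omega
    set t := m / g with htdef
    have hmt : m = g * t := (Int.mul_ediv_cancel' hgm).symm
    have ht1 : 1 ≤ t := by nlinarith
    have htm1 : t ≤ m - 1 := by nlinarith
    refine ⟨t, A / g, ht1, htm1, ?_, ?_⟩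
    · have : A / g * m - t * A = 0 := by
        have h1 : A / g * m = A / g * g * t := by rw [hmt, ← mul_assoc]
        rw [h1, Int.ediv_mul_cancel hgA]; ring
      omega
    · have : A / g * m - t * A = 0 := by
        have h1 : A / g * m = A / g * g * t := by rw [hmt, ← mul_assoc]
        rw [h1, Int.ediv_mul_cancel hgA]; ring
      omega

lemma primitive (U : Fin 2 → ℤ) (hU : U ≠ 0) :
    ∃ (a : Fin 2 → ℤ) (N : ℤ), 0 < N ∧ (∀ j, U j = N * a j) ∧
      ∀ C : Fin 2 → ℤ, C 0 * U 1 = C 1 * U 0 → ∃ σ : ℤ, ∀ j, C j = σ * a j := by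
  have hgne : Int.gcd (U 0) (U 1) ≠ 0 := by
    intro h0
    obtain ⟨h1, h2⟩ := Int.gcd_eq_zero_iff.mp h0
    apply hU; funext j; rcases fin2cases j with rfl | rfl <;> simpa
  have hgpos : 0 < Int.gcd (U 0) (U 1) := Nat.pos_of_ne_zero hgne
  set N : ℤ := (Int.gcd (U 0) (U 1) : ℤ) with hN
  have hN0 : 0 < N := by rw [hN]; exact_mod_cast hgpos
  have hd0 : N ∣ U 0 := Int.gcd_dvd_left (U 0) (U 1)
  have hd1 : N ∣ U 1 := Int.gcd_dvd_right (U 0) (U 1)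
  set a0 : ℤ := U 0 / N with ha0
  set a1 : ℤ := U 1 / N with ha1
  have hU0 : U 0 = N * a0 := (Int.mul_ediv_cancel' hd0).symm
  have hU1 : U 1 = N * a1 := (Int.mul_ediv_cancel' hd1).symm
  have hcop : IsCoprime a0 a1 := by
    rw [Int.isCoprime_iff_gcd_eq_one]
    exact Int.gcd_div_gcd_div_gcd hgpos
  refine ⟨fun j => if j = 0 then a0 else a1, N, hN0, ?_, ?_⟩
  · intro j; rcases fin2cases j with rfl | rfl <;> simp [hU0, hU1]
  · intro C hC
    have hC' : C 0 * a1 = C 1 * a0 := by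
      have hNne : N ≠ 0 := ne_of_gt hN0
      have : N * (C 0 * a1) = N * (C 1 * a0) := by
        rw [hU0, hU1] at hC; linarith [hC]
      exact mul_left_cancel₀ hNne this
    rcases eq_or_ne a0 0 with h0 | h0
    · have hu : IsCoprime (0 : ℤ) a1 := h0 ▸ hcop
      have ha1u : a1 = 1 ∨ a1 = -1 := by
        have := Int.isUnit_iff.mp (isCoprime_zero_left.mp hu)
        tauto
      have hC0 : C 0 = 0 := by
        rw [h0, mul_zero] at hC'
        rcases ha1u with h | h <;> rw [h] at hC' <;> omega
      refine ⟨C 1 * a1, fun j => ?_⟩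
      rcases fin2cases j with rfl | rfl
      · simp [h0, hC0]
      · simp only [if_neg (by decide : (1 : Fin 2) ≠ 0)]
        rcases ha1u with h | h <;> rw [h] <;> ring
    · have hdvd : a0 ∣ C 0 := by
        have : a0 ∣ C 0 * a1 := ⟨C 1, by linarith [hC']⟩
        exact hcop.dvd_of_dvd_mul_right this
      have h1 : C 0 / a0 * a0 = C 0 := Int.ediv_mul_cancel hdvd
      refine ⟨C 0 / a0, fun j => ?_⟩
      rcases fin2cases j with rfl | rfl
      · show C 0 = C 0 / a0 * (if (0 : Fin 2) = 0 then a0 else a1)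
        rw [if_pos rfl]; omega
      · simp only [if_neg (by decide : (1 : Fin 2) ≠ 0)]
        have : a0 * (C 0 / a0 * a1) = a0 * C 1 := by
          calc a0 * (C 0 / a0 * a1) = (C 0 / a0 * a0) * a1 := by ring
            _ = C 0 * a1 := by rw [h1]
            _ = C 1 * a0 := hC'
            _ = a0 * C 1 := by ring
        exact (mul_left_cancel₀ h0 this).symm

lemma facet_two_pts {d : ℕ} {V : Set (Fin d → ℝ)}
    (f : (Fin d → ℝ) →ᵃ[ℝ] ℝ) (hfV : ∀ v ∈ V, 0 ≤ f v)
    {x y : Fin d → ℝ} (hx : x ∈ convexHull ℝ V) (hy : y ∈ convexHull ℝ V)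
    (hfx : f x = 0) (hfy : f y = 0) (hxy : x ≠ y) :
    ∃ v w, v ∈ V ∧ w ∈ V ∧ f v = 0 ∧ f w = 0 ∧ v ≠ w := by
  set V₀ : Set (Fin d → ℝ) := {v ∈ V | f v = 0} with hV₀
  have key : ∀ p ∈ convexHull ℝ V, f p = 0 → p ∈ convexHull ℝ V₀ := by
    intro p hp hfp
    rw [convexHull_eq] at hp
    obtain ⟨κ, t, w, zf, hw0, hw1, hzs, hcm⟩ := hp
    have hsum : p = ∑ i ∈ t, w i • zf i := by
      rw [← hcm, Finset.centerMass_eq_of_sum_1 _ _ hw1]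
    have hfsum : ∑ i ∈ t, w i * f (zf i) = 0 := by
      rw [← aff_sum f t w zf hw1, ← hsum, hfp]
    have hzero : ∀ i ∈ t, w i * f (zf i) = 0 :=
      (Finset.sum_eq_zero_iff_of_nonneg
        (fun i hi => mul_nonneg (hw0 i hi) (hfV _ (hzs i hi)))).mp hfsum
    have hx2 : p = Finset.centerMass {i ∈ t | w i ≠ 0} w zf := by
      rw [Finset.centerMass_filter_ne_zero, hcm]
    rw [hx2]
    apply Finset.centerMass_mem_convexHull
    · intro i hi; exact hw0 i (Finset.mem_filter.mp hi).1
    · rw [Finset.sum_filter_ne_zero, hw1]; norm_num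
    · intro i hi
      obtain ⟨hit, hwne⟩ := Finset.mem_filter.mp hi
      refine ⟨hzs i hit, ?_⟩
      rcases mul_eq_zero.mp (hzero i hit) with hcase | hcase
      · exact absurd hcase hwne
      · exact hcase
  have h0 : x ∈ convexHull ℝ V₀ := key x hx hfx
  have h0' : y ∈ convexHull ℝ V₀ := key y hy hfy
  have hnt : ¬ V₀.Subsingleton := by
    intro hss
    rcases hss.eq_empty_or_singleton with he | ⟨a, ha⟩
    · rw [he, convexHull_empty] at h0; exact h0
    · rw [ha, convexHull_singleton] at h0 h0'
      exact hxy (h0.trans h0'.symm)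
  rw [Set.not_subsingleton_iff] at hnt
  obtain ⟨v, hv, w, hw, hvw⟩ := hnt
  exact ⟨v, w, hv.1, hw.1, hv.2, hw.2, hvw⟩

end QJ

set_option maxHeartbeats 2000000 in
/-- In dimension at most `2`, every quantum jump has height `1`: the extra lattice point `z`
has height `1` over every facet of `P` visible from it. -/
theorem stmt_8 (d n : ℕ) (hd : d ≤ 2) (P : Set (Fin d → ℝ))
    (hP : IsLatticePolytope P) (hPn : IsNormal P)
    (hdim : Module.finrank ℝ (affineSpan ℝ P).direction = d)
    (h : Fin n → ((Fin d → ℝ) →ᵃ[ℝ] ℝ))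
    (hrep : P = {x | ∀ i, 0 ≤ h i x})
    (hint : ∀ i, ∀ x : Fin d → ℝ, IsLatticePt x → ∃ m : ℤ, h i x = m)
    (hsurj : ∀ i, ∀ m : ℤ, ∃ x : Fin d → ℝ, IsLatticePt x ∧ h i x = m)
    (hfacet : ∀ i,
      Module.finrank ℝ (affineSpan ℝ {x ∈ P | h i x = 0}).direction = d - 1)
    (z : Fin d → ℝ) (hz : IsLatticePt z) (hzP : z ∉ P)
    -- (P, conv(P,z)) is a quantum jump:
    (hlat : {x ∈ convexHull ℝ (insert z P) | IsLatticePt x} = {x ∈ P | IsLatticePt x} ∪ {z})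
    (hQn : IsNormal (convexHull ℝ (insert z P))) :
    ∀ i, h i z < 0 → h i z = -1 := by
  obtain ⟨V, hVfin, hVne, hVlat, hPV⟩ := hP
  intro i hi
  obtain ⟨nz, hnz⟩ := hint i z hz
  by_contra hne
  have hnzneg : nz < 0 := by rw [hnz] at hi; exact_mod_cast hi
  have hnz2 : nz ≤ -2 := by
    rcases eq_or_ne nz (-1) with h1 | h1
    · exact absurd (by rw [hnz, h1]; norm_num) hne
    · omega
  -- convexity of P
  have hPconv : Convex ℝ P := by
    rw [hrep]
    have hset : {x : Fin d → ℝ | ∀ j, 0 ≤ h j x} = ⋂ j, (h j) ⁻¹' (Ici 0) := by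
      ext x; simp [Set.mem_iInter]
    rw [hset]
    exact convex_iInter fun j => (convex_Ici (0:ℝ)).affine_preimage _
  have hPsub : P ⊆ convexHull ℝ (insert z P) :=
    (Set.subset_insert z P).trans (subset_convexHull ℝ _)
  have hzQ : z ∈ convexHull ℝ (insert z P) := subset_convexHull ℝ _ (Set.mem_insert z P)
  -- the contradiction machine
  have contra : ∀ q : Fin d → ℝ, q ∈ convexHull ℝ (insert z P) → IsLatticePt q →
      h i q < 0 → h i q ≠ h i z → False := by
    intro q hq hql hqneg hqz
    have hq' : q ∈ {x ∈ P | IsLatticePt x} ∪ {z} := by rw [← hlat]; exact ⟨hq, hql⟩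
    rcases hq' with ⟨hqP, _⟩ | hqz'
    · rw [hrep] at hqP; exact absurd (hqP i) (not_le.mpr hqneg)
    · rw [Set.mem_singleton_iff] at hqz'
      exact hqz (by rw [hqz'])
  -- the lattice vector g with linear part value 1
  obtain ⟨x₀, hx₀l, hx₀⟩ := hsurj i 0
  obtain ⟨x₁, hx₁l, hx₁⟩ := hsurj i 1
  have hLg : (h i).linear (x₁ - x₀) = 1 := by
    have hadd := QJ.aff_add (h i) (x₁ - x₀) x₀
    rw [sub_add_cancel, hx₁, hx₀] at hadd
    push_cast at hadd; linarith
  set g : Fin d → ℝ := x₁ - x₀ with hgdef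
  have hgl : IsLatticePt g := QJ.latt_sub hx₁l hx₀l
  obtain rfl | rfl | rfl : d = 0 ∨ d = 1 ∨ d = 2 := by omega
  -- dimension 0 : impossible
  · obtain ⟨v₀, hv₀⟩ := hVne
    have hzv : z = v₀ := funext fun j => j.elim0
    exact hzP (hzv ▸ (hPV ▸ subset_convexHull ℝ V hv₀))
  -- dimension 1
  · have hg0 : g 0 ≠ 0 := by
      intro h0
      have hgz : g = 0 := funext fun j => by rw [Fin.eq_zero j]; exact h0
      rw [hgz, map_zero] at hLg; norm_num at hLg
    have hinj : ∀ x y : Fin 1 → ℝ, h i x = h i y → x = y := by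
      intro x y hxy
      have hL0 : (h i).linear (x - y) = 0 := by
        have hadd := QJ.aff_add (h i) (x - y) y
        rw [sub_add_cancel, hxy] at hadd; linarith
      have hdecomp : x - y = ((x - y) 0 / g 0) • g := by
        funext j; rw [Fin.eq_zero j]
        simp only [Pi.smul_apply, smul_eq_mul]
        field_simp
      rw [hdecomp, map_smul, hLg, smul_eq_mul, mul_one] at hL0
      have hxy0 : (x - y) 0 = 0 := by
        field_simp at hL0
        simpa using hL0
      have : x - y = 0 := by
        rw [hdecomp, hxy0]; simp
      exact sub_eq_zero.mp this
    obtain ⟨v₀, hv₀⟩ := hVne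
    have hp₀ : v₀ ∈ P := hPV ▸ subset_convexHull ℝ V hv₀
    have hp₀pos : 0 ≤ h i v₀ := by rw [hrep] at hp₀; exact hp₀ i
    set a : ℝ := h i v₀ with hadef
    set μ : ℝ := (a - ((nz : ℝ) + 1)) / (a - nz) with hμdef
    have hden : (0:ℝ) < a - nz := by
      have : (nz:ℝ) ≤ -2 := by exact_mod_cast hnz2
      linarith
    have hμ0 : 0 ≤ μ := by
      apply div_nonneg _ (le_of_lt hden)
      have : (nz:ℝ) ≤ -2 := by exact_mod_cast hnz2
      linarith
    have hμ1 : μ ≤ 1 := by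
      rw [div_le_one hden]; linarith
    set q : Fin 1 → ℝ := g + z with hqdef
    have hql : IsLatticePt q := QJ.latt_add hgl hz
    have hqval : h i q = (nz : ℝ) + 1 := by
      rw [hqdef, QJ.aff_add, hLg, hnz]; ring
    have hcombo : h i (μ • z + (1 - μ) • v₀) = (nz:ℝ) + 1 := by
      rw [Convex.combo_affine_apply (by ring : μ + (1 - μ) = 1)]
      rw [hnz]
      simp only [smul_eq_mul]
      rw [hμdef]
      field_simp
      ring
    have hqeq : q = μ • z + (1 - μ) • v₀ := by
      apply hinj
      rw [hqval, hcombo]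
    have hqQ : q ∈ convexHull ℝ (insert z P) := by
      rw [hqeq]
      exact (convex_convexHull ℝ _) hzQ (hPsub hp₀) hμ0 (by linarith) (by ring)
    apply contra q hqQ hql
    · rw [hqval]
      have : (nz:ℝ) ≤ -2 := by exact_mod_cast hnz2
      linarith
    · rw [hqval, hnz]
      intro hcontra
      norm_num at hcontra
  -- dimension 2
  · have hf1 : Module.finrank ℝ (affineSpan ℝ {x ∈ P | h i x = 0}).direction = 1 := by
      have hf := hfacet i; norm_num at hf; exact hf
    have hFnt : ∃ x y : Fin 2 → ℝ, (x ∈ P ∧ h i x = 0) ∧ (y ∈ P ∧ h i y = 0) ∧ x ≠ y := by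
      by_contra hcon
      push_neg at hcon
      have hss : ({x ∈ P | h i x = 0} : Set (Fin 2 → ℝ)).Subsingleton := by
        intro x hx y hy
        exact hcon x y ⟨hx.1, hx.2⟩ ⟨hy.1, hy.2⟩
      have hdir := hf1
      rw [direction_affineSpan] at hdir
      rcases hss.eq_empty_or_singleton with he | ⟨aa, ha⟩
      · rw [he, vectorSpan_empty] at hdir; simp at hdir
      · rw [ha, vectorSpan_singleton] at hdir; simp at hdir
    obtain ⟨xF, yF, ⟨hxP, hx0⟩, ⟨hyP, hy0⟩, hxyne⟩ := hFnt
    have hxV : xF ∈ convexHull ℝ V := by rw [← hPV]; exact hxP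
    have hyV : yF ∈ convexHull ℝ V := by rw [← hPV]; exact hyP
    have hfV : ∀ v ∈ V, 0 ≤ h i v := by
      intro v hv
      have hvP : v ∈ P := by rw [hPV]; exact subset_convexHull ℝ V hv
      rw [hrep] at hvP; exact hvP i
    obtain ⟨v, w, hvV, hwV, hv0, hw0, hvw⟩ :=
      QJ.facet_two_pts (h i) hfV hxV hyV hx0 hy0 hxyne
    have hvP : v ∈ P := by rw [hPV]; exact subset_convexHull ℝ V hvV
    have hwP : w ∈ P := by rw [hPV]; exact subset_convexHull ℝ V hwV
    have hvl : IsLatticePt v := hVlat v hvV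
    have hwl : IsLatticePt w := hVlat w hwV
    obtain ⟨U, hU⟩ := QJ.latt_exists (QJ.latt_sub hwl hvl)
    have hU' : ∀ j, w j - v j = (U j : ℝ) := by
      intro j; have := hU j; simpa using this
    have hUne : U ≠ 0 := by
      intro h0
      apply hvw
      have hwv : w = v := funext fun j => by
        have := hU' j; rw [h0] at this; simp at this; linarith
      exact hwv.symm
    obtain ⟨a, N, hN0, hUa, hgen⟩ := QJ.primitive U hUne
    set e : Fin 2 → ℝ := fun j => (a j : ℝ) with hedef
    have hej : ∀ j, e j = (a j : ℝ) := fun j => rfl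
    have hel : IsLatticePt e := fun j => ⟨a j, rfl⟩
    have hwvj : ∀ j, w j - v j = (N : ℝ) * e j := by
      intro j
      rw [hU' j, hUa j, hej j]; push_cast; ring
    have hwj : ∀ j, w j = v j + (N : ℝ) * e j := by
      intro j; have := hwvj j; linarith
    have hLu : (h i).linear (w - v) = 0 := by
      have hadd := QJ.aff_add (h i) (w - v) v
      rw [sub_add_cancel, hw0, hv0] at hadd; linarith
    have hLe : (h i).linear e = 0 := by
      have hue : w - v = (N : ℝ) • e := funext fun j => by
        simp only [Pi.sub_apply, Pi.smul_apply, smul_eq_mul]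
        exact hwvj j
      rw [hue, map_smul, smul_eq_mul] at hLu
      have hNne : (N : ℝ) ≠ 0 := by
        have : (0:ℝ) < (N:ℝ) := by exact_mod_cast hN0
        linarith
      exact (mul_eq_zero.mp hLu).resolve_left hNne
    -- expansion of the linear part in coordinates
    set δ0 : Fin 2 → ℝ := fun j => if j = 0 then 1 else 0 with hδ0
    set δ1 : Fin 2 → ℝ := fun j => if j = 1 then 1 else 0 with hδ1
    have hLexp : ∀ x : Fin 2 → ℝ, (h i).linear x =
        x 0 * (h i).linear δ0 + x 1 * (h i).linear δ1 := by
      intro x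
      have hx : x = x 0 • δ0 + x 1 • δ1 := by
        funext j; rcases QJ.fin2cases j with rfl | rfl <;>
          simp [hδ0, hδ1]
      calc (h i).linear x = (h i).linear (x 0 • δ0 + x 1 • δ1) := by rw [← hx]
        _ = _ := by rw [map_add, map_smul, map_smul]; simp [smul_eq_mul]
    have hgenR : ∀ c : Fin 2 → ℝ, IsLatticePt c → (h i).linear c = 0 →
        ∃ σ : ℤ, ∀ j, c j = (σ : ℝ) * e j := by
      intro c hcl hLc
      obtain ⟨C, hC⟩ := QJ.latt_exists hcl
      have hc : c 0 * (h i).linear δ0 + c 1 * (h i).linear δ1 = 0 := by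
        rw [← hLexp]; exact hLc
      have hu2 : (w - v) 0 * (h i).linear δ0 + (w - v) 1 * (h i).linear δ1 = 0 := by
        rw [← hLexp]; exact hLu
      have hg2 : g 0 * (h i).linear δ0 + g 1 * (h i).linear δ1 = 1 := by
        rw [← hLexp]; exact hLg
      set pp := (h i).linear δ0 with hppdef
      set qq := (h i).linear δ1 with hqqdef
      have hdet : c 0 * (w - v) 1 - c 1 * (w - v) 0 = 0 := by
        by_contra hD
        have hp0 : pp = 0 := by
          have hkey : (c 0 * (w - v) 1 - c 1 * (w - v) 0) * pp =
              (w - v) 1 * (c 0 * pp + c 1 * qq) - c 1 * ((w - v) 0 * pp + (w - v) 1 * qq) := by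
            ring
          rw [hc, hu2] at hkey
          simp only [mul_zero, sub_zero] at hkey
          exact (mul_eq_zero.mp hkey).resolve_left hD
        have hq0 : qq = 0 := by
          have hkey : (c 0 * (w - v) 1 - c 1 * (w - v) 0) * qq =
              c 0 * ((w - v) 0 * pp + (w - v) 1 * qq) - (w - v) 0 * (c 0 * pp + c 1 * qq) := by
            ring
          rw [hc, hu2] at hkey
          simp only [mul_zero, sub_zero, zero_sub] at hkey
          have : (c 0 * (w - v) 1 - c 1 * (w - v) 0) * qq = 0 := by linarith
          exact (mul_eq_zero.mp this).resolve_left hD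
        rw [hp0, hq0] at hg2; norm_num at hg2
      have hdetZ : C 0 * U 1 = C 1 * U 0 := by
        have e0 : c 0 = (C 0 : ℝ) := hC 0
        have e1 : c 1 = (C 1 : ℝ) := hC 1
        have f0 : (w - v) 0 = (U 0 : ℝ) := hU 0
        have f1 : (w - v) 1 = (U 1 : ℝ) := hU 1
        rw [e0, e1, f0, f1] at hdet
        have : (C 0 : ℝ) * U 1 = (C 1 : ℝ) * U 0 := by linarith
        exact_mod_cast this
      obtain ⟨σ, hσ⟩ := hgen C hdetZ
      refine ⟨σ, fun j => ?_⟩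
      rw [hC j, hσ j, hej j]; push_cast; ring
    -- decompose z over the adapted basis
    set m : ℤ := -nz with hmdef
    have hm2 : 2 ≤ m := by omega
    have hzdec : ∃ A : ℤ, ∀ j, z j = v j + (A : ℝ) * e j + (nz : ℝ) * g j := by
      have hcl : IsLatticePt (z - v - (nz : ℝ) • g) := by
        intro j
        obtain ⟨az, haz⟩ := hz j
        obtain ⟨av, hav⟩ := hvl j
        obtain ⟨ag, hag⟩ := hgl j
        exact ⟨az - av - nz * ag, by
          simp only [Pi.sub_apply, Pi.smul_apply, smul_eq_mul, haz, hav, hag]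
          push_cast; ring⟩
      have hLc : (h i).linear (z - v - (nz : ℝ) • g) = 0 := by
        have h1 : (h i).linear (z - v) = (nz : ℝ) := by
          have hadd := QJ.aff_add (h i) (z - v) v
          rw [sub_add_cancel, hnz, hv0] at hadd; linarith
        rw [map_sub, map_smul, h1, hLg]; simp
      obtain ⟨A, hA⟩ := hgenR _ hcl hLc
      refine ⟨A, fun j => ?_⟩
      have hAj := hA j
      simp only [Pi.sub_apply, Pi.smul_apply, smul_eq_mul] at hAj
      linarith
    obtain ⟨A, hzj⟩ := hzdec
    obtain ⟨t, k, ht1, htm, hr0, hrm⟩ := QJ.numth m A hm2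
    -- the forbidden lattice point q
    set q : Fin 2 → ℝ := fun j => v j + (k : ℝ) * e j - (t : ℝ) * g j with hqdef
    have hqj : ∀ j, q j = v j + (k : ℝ) * e j - (t : ℝ) * g j := fun j => rfl
    have hqvec : q = v + (k : ℝ) • e - (t : ℝ) • g := by
      funext j
      simp only [Pi.sub_apply, Pi.add_apply, Pi.smul_apply, smul_eq_mul]
      exact hqj j
    have hql : IsLatticePt q := by
      rw [hqvec]; exact QJ.latt_comb hvl hel hgl k t
    have hqval : h i q = -(t : ℝ) := by
      have hqe : q = ((k : ℝ) • e - (t : ℝ) • g) + v := by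
        rw [hqvec]; abel
      rw [hqe, QJ.aff_add, map_sub, map_smul, map_smul, hLe, hLg, hv0]
      simp
    have htmR : (0:ℝ) < (m:ℝ) - (t:ℝ) := by
      have hcast : (t:ℝ) ≤ (m:ℝ) - 1 := by exact_mod_cast htm
      linarith
    have hmR : (0:ℝ) < (m:ℝ) := by
      have : (2:ℝ) ≤ (m:ℝ) := by exact_mod_cast hm2
      linarith
    have hNR : (0:ℝ) < (N:ℝ) := by exact_mod_cast hN0
    have hN1 : (1:ℝ) ≤ (N:ℝ) := by exact_mod_cast hN0
    set r : ℤ := k * m - t * A with hrdef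
    have hrr : (r : ℝ) = (k:ℝ) * m - (t:ℝ) * A := by rw [hrdef]; push_cast; ring
    set μ : ℝ := (r : ℝ) / (((m:ℝ) - t) * N) with hμdef
    have hr0R : (0:ℝ) ≤ (r:ℝ) := by exact_mod_cast hr0
    have hrmR : (r:ℝ) ≤ (m:ℝ) - t := by
      have : (r:ℝ) ≤ ((m - t : ℤ) : ℝ) := by exact_mod_cast hrm
      push_cast at this; linarith
    have hμ0 : 0 ≤ μ := div_nonneg hr0R (by positivity)
    have hμ1 : μ ≤ 1 := by
      rw [hμdef, div_le_one (by positivity)]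
      nlinarith
    set p : Fin 2 → ℝ := fun j => (1 - μ) * v j + μ * w j with hpdef
    have hpj : ∀ j, p j = (1 - μ) * v j + μ * w j := fun j => rfl
    have hpP : p ∈ P := by
      have hmem := hPconv hvP hwP (by linarith : (0:ℝ) ≤ 1 - μ) hμ0 (by ring)
      have : (1 - μ) • v + μ • w = p := funext fun j => by
        simp only [Pi.add_apply, Pi.smul_apply, smul_eq_mul]
        exact (hpj j).symm
      rwa [this] at hmem
    have hcombo : q = ((t:ℝ)/m) • z + (1 - (t:ℝ)/m) • p := by
      funext j
      simp only [Pi.add_apply, Pi.smul_apply, smul_eq_mul]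
      rw [hqj j, hpj j, hzj j, hwj j, hμdef, hrr]
      have hnzm : (nz : ℝ) = -(m : ℝ) := by rw [hmdef]; push_cast; ring
      rw [hnzm]
      field_simp
      ring
    have hqQ : q ∈ convexHull ℝ (insert z P) := by
      rw [hcombo]
      have ht0R : (0:ℝ) ≤ (t:ℝ) := by
        have : (1:ℝ) ≤ (t:ℝ) := by exact_mod_cast ht1
        linarith
      have h1 : 0 ≤ (t:ℝ)/m := div_nonneg ht0R (le_of_lt hmR)
      have h2 : (t:ℝ)/m ≤ 1 := by
        rw [div_le_one hmR]
        have : (t:ℝ) ≤ (m:ℝ) - 1 := by exact_mod_cast htm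
        linarith
      exact (convex_convexHull ℝ _) hzQ (hPsub hpP) h1 (by linarith) (by ring)
    refine contra q hqQ hql ?_ ?_
    · rw [hqval]
      have : (1:ℝ) ≤ (t:ℝ) := by exact_mod_cast ht1
      linarith
    · rw [hqval, hnz]
      intro hcon
      have hZ : -t = nz := by exact_mod_cast hcon
      omega
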